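/- Let X and Y be compact metric spaces, T : X → X and S : Y → Y homeomorphisms, μ a T-invariant Borel probability measure on X and ν an S-invariant Borel probability measure on Y. Suppose (Y,S) is topologically weakly mixing in the sense that every continuous eigenfunction of (Y,S) is constant. Let f ∈ C(X,ℤ) and g ∈ C(Y,ℤ) satisfy ∫ f dμ = ∫ g dν and ∫ f dμ ∉ ℤ. Then the function F : X×Y → ℤ defined by F(x,y) = f(x) − g(y) satisfies ∫_{X×Y} F d(μ⊗ν) = 0, but F is not a coboundary: there is no H ∈ C(X×Y, ℤ) with F(x,y) = H(x,y) − H(Tx,Sy) for all (x,y) ∈ X×Y. -/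

import Mathlib

open MeasureTheory

lemma stmt11_wm_const {Y : Type*} [MetricSpace Y] [CompactSpace Y] (S : Y ≃ₜ Y)
    (hwm : ∀ f : C(Y, ℂ), f ≠ 0 → ∀ lam : ℂ, (∀ y : Y, f (S y) = lam * f y) →
      ∃ c : ℂ, ∀ y : Y, f y = c)
    (e : Y → ℤ) (he : Continuous e) (p : ℕ) (hp : 0 < p)
    (hper : ∀ y, e ((⇑S)^[p] y) = e y) :
    ∀ y y', e y = e y' := by
  set ω : ℂ := Complex.exp (2 * Real.pi * Complex.I / p) with hω
  have hp0 : (p : ℂ) ≠ 0 := Nat.cast_ne_zero.mpr hp.ne'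
  have hωp : ω ^ p = 1 := by
    rw [hω, ← Complex.exp_nat_mul]
    rw [show (p : ℂ) * (2 * Real.pi * Complex.I / p) = 2 * Real.pi * Complex.I by
      field_simp]
    exact Complex.exp_two_pi_mul_I
  have hωj : ∀ j : ℕ, 0 < j → j < p → ω ^ j ≠ 1 := by
    intro j hj hjp h1
    rw [hω, ← Complex.exp_nat_mul, Complex.exp_eq_one_iff] at h1
    obtain ⟨n, hn⟩ := h1
    have h2 : (2 * (Real.pi : ℂ) * Complex.I) ≠ 0 := by
      simp [Real.pi_ne_zero, Complex.I_ne_zero]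
    have hj' : (j : ℂ) = (n : ℂ) * p := by
      field_simp at hn
      linear_combination hn
    have hj2 : (j : ℤ) = n * p := by exact_mod_cast hj'
    have hdvd : (p : ℤ) ∣ j := ⟨n, by linarith⟩
    have := Int.le_of_dvd (by exact_mod_cast hj) hdvd
    omega
  set φ : ℕ → Y → ℂ := fun k y => ∑ j ∈ Finset.range p, (ω ^ k) ^ j * (e ((⇑S)^[j] y) : ℂ)
    with hφ
  have hφcont : ∀ k, Continuous (φ k) := by
    intro k
    apply continuous_finset_sum
    intro j _
    have : Continuous fun y => (e ((⇑S)^[j] y) : ℂ) := by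
      exact Continuous.comp (by continuity) (he.comp (S.continuous.iterate j))
    exact continuous_const.mul this
  have hrel : ∀ k y, (ω ^ k) * φ k (S y) = φ k y := by
    intro k y
    have hζp : (ω ^ k) ^ p = 1 := by
      rw [← pow_mul, mul_comm, pow_mul, hωp, one_pow]
    calc (ω ^ k) * φ k (S y)
        = ∑ j ∈ Finset.range p, (ω ^ k) ^ (j+1) * (e ((⇑S)^[j+1] y) : ℂ) := by
          rw [hφ, Finset.mul_sum]
          refine Finset.sum_congr rfl fun j _ => ?_
          rw [pow_succ, ← Function.iterate_succ_apply]
          ring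
      _ = (∑ j ∈ Finset.range (p+1), (ω ^ k) ^ j * (e ((⇑S)^[j] y) : ℂ))
            - (ω ^ k) ^ 0 * (e ((⇑S)^[0] y) : ℂ) := by
          rw [Finset.sum_range_succ']; ring
      _ = φ k y := by
          rw [Finset.sum_range_succ, hφ, hζp, hper y]
          simp
  have hω0 : ω ≠ 0 := Complex.exp_ne_zero _
  have hconst : ∀ k, ∃ c : ℂ, ∀ y, φ k y = c := by
    intro k
    by_cases hz : ∀ y, φ k y = 0
    · exact ⟨0, hz⟩
    · push_neg at hz
      obtain ⟨y1, hy1⟩ := hz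
      have hne : (⟨φ k, hφcont k⟩ : C(Y, ℂ)) ≠ 0 := by
        intro h
        exact hy1 (by simpa using congrArg (fun F : C(Y,ℂ) => F y1) h)
      obtain ⟨c, hc⟩ := hwm ⟨φ k, hφcont k⟩ hne ((ω ^ k)⁻¹) (by
        intro y
        have := hrel k y
        have hζ0 : (ω ^ k) ≠ 0 := pow_ne_zero _ hω0
        field_simp
        simpa [mul_comm] using this)
      exact ⟨c, fun y => hc y⟩
  have hrecon : ∀ y, (p : ℂ) * (e y : ℂ) = ∑ k ∈ Finset.range p, φ k y := by
    intro y
    have hswap : ∑ k ∈ Finset.range p, φ k y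
        = ∑ j ∈ Finset.range p, (∑ k ∈ Finset.range p, (ω ^ j) ^ k) * (e ((⇑S)^[j] y) : ℂ) := by
      rw [hφ, Finset.sum_comm]
      refine Finset.sum_congr rfl fun j _ => ?_
      rw [Finset.sum_mul]
      refine Finset.sum_congr rfl fun k _ => ?_
      rw [← pow_mul, ← pow_mul, mul_comm j k]
    rw [hswap, Finset.sum_eq_single_of_mem 0 (Finset.mem_range.mpr hp)]
    · simp
    · intro j hj hj0
      have hgs : ∑ k ∈ Finset.range p, (ω ^ j) ^ k = 0 := by
        rw [geom_sum_eq (hωj j (Nat.pos_of_ne_zero hj0) (Finset.mem_range.mp hj))]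
        rw [← pow_mul, mul_comm, pow_mul, hωp, one_pow, sub_self, zero_div]
      rw [hgs, zero_mul]
  intro y y'
  have h1 : (p : ℂ) * (e y : ℂ) = (p : ℂ) * (e y' : ℂ) := by
    rw [hrecon, hrecon]
    refine Finset.sum_congr rfl fun k _ => ?_
    obtain ⟨c, hc⟩ := hconst k
    rw [hc, hc]
  have := mul_left_cancel₀ hp0 h1
  exact_mod_cast this

lemma stmt11_int {Z : Type*} [MetricSpace Z] [CompactSpace Z] [MeasurableSpace Z] [BorelSpace Z]
    (μ : Measure Z) [IsFiniteMeasure μ] {F : Z → ℝ} (hF : Continuous F) : Integrable F μ := by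
  rw [← integrableOn_univ]
  exact hF.continuousOn.integrableOn_compact isCompact_univ

/-- If `(Y,S)` is topologically weakly mixing, `μ`, `ν` are invariant Borel
probability measures, `f ∈ C(X,ℤ)`, `g ∈ C(Y,ℤ)` with `∫ f dμ = ∫ g dν ∉ ℤ`, then
`F(x,y) = f(x) − g(y)` has zero integral against `μ ⊗ ν` but is not a coboundary of the
product system. -/
theorem stmt11 {X Y : Type*} [MetricSpace X] [MetricSpace Y] [CompactSpace X] [CompactSpace Y]
    [MeasurableSpace X] [BorelSpace X] [MeasurableSpace Y] [BorelSpace Y]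
    (T : X ≃ₜ X) (S : Y ≃ₜ Y)
    (μ : Measure X) (ν : Measure Y)
    (hμp : IsProbabilityMeasure μ) (hνp : IsProbabilityMeasure ν)
    (hμ : Measure.map T μ = μ) (hν : Measure.map S ν = ν)
    (hwm : ∀ f : C(Y, ℂ), f ≠ 0 → ∀ lam : ℂ, (∀ y : Y, f (S y) = lam * f y) →
      ∃ c : ℂ, ∀ y : Y, f y = c)
    (f : C(X, ℤ)) (g : C(Y, ℤ))
    (heq : ∫ x, (f x : ℝ) ∂μ = ∫ y, (g y : ℝ) ∂ν)
    (hnotint : ¬ ∃ z : ℤ, ∫ x, (f x : ℝ) ∂μ = (z : ℝ)) :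
    (∫ p : X × Y, ((f p.1 : ℝ) - (g p.2 : ℝ)) ∂(μ.prod ν)) = 0 ∧
    ¬ ∃ H : C(X × Y, ℤ), ∀ (x : X) (y : Y),
      f x - g y = H (x, y) - H (T x, S y) := by
  constructor
  · have hfc : Continuous fun x : X => (f x : ℝ) := by continuity
    have hgc : Continuous fun y : Y => (g y : ℝ) := by continuity
    have h1 : Integrable (fun p : X × Y => (f p.1 : ℝ)) (μ.prod ν) :=
      stmt11_int _ (hfc.comp continuous_fst)
    have h2 : Integrable (fun p : X × Y => (g p.2 : ℝ)) (μ.prod ν) :=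
      stmt11_int _ (hgc.comp continuous_snd)
    rw [integral_sub h1 h2]
    have e1 : (∫ p : X × Y, (f p.1 : ℝ) ∂(μ.prod ν)) = ∫ x, (f x : ℝ) ∂μ := by
      rw [integral_prod _ h1]
      simp [integral_const]
    have e2 : (∫ p : X × Y, (g p.2 : ℝ) ∂(μ.prod ν)) = ∫ y, (g y : ℝ) ∂ν := by
      rw [integral_prod _ h2]
      simp [integral_const]
    rw [e1, e2, heq, sub_self]
  ·
    rintro ⟨H, hH⟩
    haveI hXne : Nonempty X := by
      by_contra h
      rw [not_nonempty_iff] at h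
      have h1 : μ Set.univ = 1 := measure_univ
      rw [Set.univ_eq_empty_iff.mpr h, measure_empty] at h1
      exact zero_ne_one h1
    haveI hYne : Nonempty Y := by
      by_contra h
      rw [not_nonempty_iff] at h
      have h1 : ν Set.univ = 1 := measure_univ
      rw [Set.univ_eq_empty_iff.mpr h, measure_empty] at h1
      exact zero_ne_one h1
    obtain ⟨x₀⟩ := hXne
    obtain ⟨y₀⟩ := hYne
    set Φ : X → Y → ℤ := fun x y => H (x, y) with hΦdef
    have hΦc : ∀ c : X, Continuous (Φ c) := fun c => H.continuous.comp (Continuous.prodMk_right c)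
    -- local constancy of slices
    obtain ⟨δ, hδ0, hδ⟩ := Metric.uniformContinuous_iff.mp
      (CompactSpace.uniformContinuous_of_continuous H.continuous) 1 one_pos
    have hloc : ∀ x x' : X, dist x' x < δ → ∀ y : Y, H (x', y) = H (x, y) := by
      intro x x' hxx y
      have hdist : dist ((x', y) : X × Y) ((x, y) : X × Y) < δ := by
        rw [Prod.dist_eq]
        simpa [hδ0] using hxx
      have h2 := hδ hdist
      rw [Int.dist_eq] at h2
      have h1 : |H (x', y) - H (x, y)| < 1 := by exact_mod_cast (by push_cast; exact h2 :
        |((H (x', y) : ℤ) : ℝ) - ((H (x, y) : ℤ) : ℝ)| < 1)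
      rw [abs_lt] at h1
      omega
    have hΦlc : IsLocallyConstant Φ := by
      rw [IsLocallyConstant.iff_exists_open]
      intro x
      refine ⟨Metric.ball x δ, Metric.isOpen_ball, Metric.mem_ball_self hδ0, fun x' hx' => ?_⟩
      funext y
      exact hloc x x' (Metric.mem_ball.mp hx') y
    have hΦfin : (Set.range Φ).Finite := hΦlc.range_finite
    -- global bound
    have hHfin : (Set.range fun q : X × Y => |H q|).Finite := by
      have h := ((IsLocallyConstant.iff_continuous (⇑H)).mpr H.continuous).range_finite
      rw [show (fun q : X × Y => |H q|) = abs ∘ ⇑H from rfl, Set.range_comp]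
      exact h.image _
    obtain ⟨M, hM⟩ := hHfin.bddAbove
    have hM' : ∀ q : X × Y, |H q| ≤ M := fun q => hM ⟨q, rfl⟩
    -- key constancy of slice differences
    have hkey : ∀ x x' : X, ∀ y : Y, H (x, y) - H (x', y) = H (x, y₀) - H (x', y₀) := by
      intro x x'
      set E : ℕ → Y → ℤ := fun n => Φ ((⇑T)^[n] x) - Φ ((⇑T)^[n] x') with hE
      set K : ℕ → ℤ := fun n =>
        ∑ j ∈ Finset.range n, ((f ((⇑T)^[j] x) : ℤ) - f ((⇑T)^[j] x')) with hK
      have hEapp : ∀ n y, E n y = H ((⇑T)^[n] x, y) - H ((⇑T)^[n] x', y) := fun n y => rfl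
      have hA : ∀ n y, E n ((⇑S)^[n] y) = E 0 y - K n := by
        intro n
        induction n with
        | zero => intro y; simp [hK]
        | succ n ih =>
          intro y
          have hset : (⇑S)^[n+1] y = S ((⇑S)^[n] y) := Function.iterate_succ_apply' _ _ _
          have htx : (⇑T)^[n+1] x = T ((⇑T)^[n] x) := Function.iterate_succ_apply' _ _ _
          have htx' : (⇑T)^[n+1] x' = T ((⇑T)^[n] x') := Function.iterate_succ_apply' _ _ _
          have h1 := hH ((⇑T)^[n] x) ((⇑S)^[n] y)
          have h2 := hH ((⇑T)^[n] x') ((⇑S)^[n] y)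
          have h3 := ih y
          rw [hEapp] at h3 ⊢
          rw [hset, htx, htx']
          have hKs : K (n + 1) = K n + ((f ((⇑T)^[n] x) : ℤ) - f ((⇑T)^[n] x')) := by
            rw [hK]; exact Finset.sum_range_succ _ _
          rw [hKs]
          omega
      have hEbd : ∀ n z, |E n z| ≤ 2 * M := by
        intro n z
        rw [hEapp, abs_le]
        have h1 := abs_le.mp (hM' ((⇑T)^[n] x, z))
        have h2 := abs_le.mp (hM' ((⇑T)^[n] x', z))
        constructor <;> omega
      have hKbd : ∀ n, K n ∈ Set.Icc (-(4 * M)) (4 * M) := by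
        intro n
        have h1 := hA n y₀
        have h2 := abs_le.mp (hEbd n ((⇑S)^[n] y₀))
        have h3 := abs_le.mp (hEbd 0 y₀)
        constructor <;> omega
      -- pigeonhole
      have hmaps : Set.MapsTo (fun n => (E n, K n)) (Set.univ : Set ℕ)
          (((fun pr : (Y → ℤ) × (Y → ℤ) => pr.1 - pr.2) '' (Set.range Φ ×ˢ Set.range Φ)) ×ˢ
            Set.Icc (-(4 * M)) (4 * M)) := by
        intro n _
        refine ⟨⟨(Φ ((⇑T)^[n] x), Φ ((⇑T)^[n] x')), ⟨⟨_, rfl⟩, ⟨_, rfl⟩⟩, rfl⟩, hKbd n⟩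
      have htfin : (((fun pr : (Y → ℤ) × (Y → ℤ) => pr.1 - pr.2) ''
          (Set.range Φ ×ˢ Set.range Φ)) ×ˢ Set.Icc (-(4 * M)) (4 * M)).Finite :=
        (((hΦfin.prod hΦfin).image _)).prod (Set.finite_Icc _ _)
      obtain ⟨a, -, b, -, hab, habeq⟩ :=
        Set.infinite_univ.exists_ne_map_eq_of_mapsTo hmaps htfin
      have hEe0 : E a = E b := congrArg Prod.fst habeq
      have hKe0 : K a = K b := congrArg Prod.snd habeq
      have hmain : ∀ m m' : ℕ, m < m' → E m = E m' → K m = K m' → ∀ y, E 0 y = E 0 y₀ := by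
        intro m m' hmm hEe hKe y
        set p := m' - m with hp
        have hppos : 0 < p := by omega
        have hstep : ∀ y, E m ((⇑S)^[p] ((⇑S)^[m] y)) = E m ((⇑S)^[m] y) := by
          intro y
          have h1 := hA m y
          have h2 := hA m' y
          rw [← hEe, ← hKe] at h2
          have hpm : p + m = m' := by omega
          rw [← hpm, Function.iterate_add_apply] at h2
          exact h2.trans h1.symm
        have hper : ∀ z, E m ((⇑S)^[p] z) = E m z := by
          intro z
          obtain ⟨y, rfl⟩ := (S.surjective.iterate m) z
          exact hstep y
        have hEcont : Continuous (E m) := (hΦc _).sub (hΦc _)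
        have hconst := stmt11_wm_const S hwm (E m) hEcont p hppos hper
        have h1 := hA m y
        have h2 := hA m y₀
        have hc := hconst ((⇑S)^[m] y) ((⇑S)^[m] y₀)
        omega
      have hconst0 : ∀ y, E 0 y = E 0 y₀ := by
        rcases hab.lt_or_gt with h | h
        · exact hmain a b h hEe0 hKe0
        · exact hmain b a h hEe0.symm hKe0.symm
      intro y
      have h := hconst0 y
      rw [hEapp, hEapp, Function.iterate_zero_apply] at h
      exact h
    -- construct φ and h and finish
    set φ : X → ℤ := fun x => H (x, y₀) with hφdef
    set ψ : Y → ℤ := fun y => H (x₀, y) with hhdef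
    have hHsplit : ∀ x y, H (x, y) = φ x + ψ y - H (x₀, y₀) := by
      intro x y
      have := hkey x x₀ y
      simp only [hφdef, hhdef]
      omega
    set k : ℤ := g y₀ + ψ y₀ - ψ (S y₀) with hkdef
    have hfx : ∀ x : X, (f x : ℤ) = k - φ (T x) + φ x := by
      intro x
      have h1 := hH x y₀
      rw [hHsplit x y₀, hHsplit (T x) (S y₀)] at h1
      omega
    have hφc2 : Continuous fun x : X => ((φ x : ℤ) : ℝ) := by
      have h1 : Continuous fun x : X => H (x, y₀) :=
        H.continuous.comp (continuous_id.prodMk continuous_const)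
      exact (continuous_of_discreteTopology : Continuous fun n : ℤ => (n : ℝ)).comp h1
    have hint1 : Integrable (fun x => ((φ x : ℤ) : ℝ)) μ := stmt11_int μ hφc2
    have hint2 : Integrable (fun x => ((φ (T x) : ℤ) : ℝ)) μ :=
      stmt11_int μ (hφc2.comp T.continuous)
    have hmap : ∫ x, ((φ (T x) : ℤ) : ℝ) ∂μ = ∫ x, ((φ x : ℤ) : ℝ) ∂μ := by
      conv_rhs => rw [← hμ]
      rw [integral_map T.continuous.aemeasurable hφc2.aestronglyMeasurable]
    apply hnotint
    refine ⟨k, ?_⟩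
    have hcast : (fun x : X => ((f x : ℤ) : ℝ))
        = fun x : X => ((k : ℝ) - ((φ (T x) : ℤ) : ℝ)) + ((φ x : ℤ) : ℝ) := by
      funext x
      rw [hfx x]
      push_cast
      ring
    have hsub : Integrable (fun x : X => (k : ℝ) - ((φ (T x) : ℤ) : ℝ)) μ :=
      (integrable_const _).sub hint2
    rw [hcast, integral_add hsub hint1, integral_sub (integrable_const _) hint2,
      integral_const, hmap]
    simp
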